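/- Let (x_n)_{n∈ℤ} be a (2,2)-sequence and set c = x_1/x_0 + 1/(x_0·x_1) + x_0/x_1. Then in the ring of formal power series ℝ[[t]] one has the identity (1 − c·t + t²)·(Σ_{n≥0} x_n tⁿ) = x_0 − (c·x_0 − x_1)·t. -/

import Mathlib

/-- the generating function identity
(1 − c·t + t²)·(Σ_{n≥0} x_n tⁿ) = x_0 − (c·x_0 − x_1)·t in ℝ[[t]]. -/
theorem q22_generating_function (x : ℤ → ℝ) (hpos : ∀ n, 0 < x n)
    (hrec : ∀ n : ℤ, x (n + 1) * x (n - 1) = x n ^ 2 + 1)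
    (c : ℝ) (hc : c = x 1 / x 0 + 1 / (x 0 * x 1) + x 0 / x 1) :
    (1 - PowerSeries.C (R := ℝ) c * PowerSeries.X + PowerSeries.X ^ 2) *
        PowerSeries.mk (fun n : ℕ => x (n : ℤ)) =
      PowerSeries.C (R := ℝ) (x 0) - PowerSeries.C (R := ℝ) (c * x 0 - x 1) * PowerSeries.X := by
  -- step lemma
  have hne : ∀ n : ℤ, x n ≠ 0 := fun n => (hpos n).ne'
  have step : ∀ n : ℤ, (x (n + 2) + x n) * x n = (x (n + 1) + x (n - 1)) * x (n + 1) := by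
    intro n
    have h1 := hrec n
    have h2 := hrec (n + 1)
    have e1 : n + 1 + 1 = n + 2 := by ring
    have e2 : n + 1 - 1 = n := by ring
    rw [e1, e2] at h2
    nlinarith [h1, h2]
  -- linear recurrence for all integers ≥ 0
  have hlin : ∀ m : ℕ, x (m + 1) + x ((m : ℤ) - 1) = c * x m := by
    intro m
    induction m with
    | zero =>
      have h0 := hrec 0
      norm_num at h0 ⊢
      have hx0 := hne 0; have hx1 := hne 1
      have hcc : c * (x 0 * x 1) = x 1 ^ 2 + 1 + x 0 ^ 2 := by
        rw [hc]; field_simp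
      have hkey : (x 1 + x (-1)) * x 1 = (c * x 0) * x 1 := by
        linear_combination h0 - hcc
      have := mul_right_cancel₀ hx1 hkey
      linarith
    | succ k ih =>
      have hs := step k
      push_cast
      have hxk := hne k
      have hk1 : ((k : ℤ) + 1 + 1) = (k : ℤ) + 2 := by ring
      have hk2 : ((k : ℤ) + 1 - 1) = (k : ℤ) := by ring
      rw [ih] at hs
      have : (x ((k : ℤ) + 2) + x k) * x k = c * x k * x (k + 1) := hs
      have := mul_right_cancel₀ hxk (by linarith [this] : (x ((k : ℤ) + 2) + x k) * x k = (c * x ((k:ℤ) + 1)) * x k)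
      rw [hk1, hk2]
      linarith [this]
  ext n
  simp only [map_sub, map_add, add_mul, sub_mul, one_mul, map_mul]
  rcases n with _ | _ | n
  · simp [PowerSeries.coeff_zero_eq_constantCoeff]
  · simp [PowerSeries.coeff_one_X, PowerSeries.coeff_succ_X_mul, pow_two, mul_assoc,
      PowerSeries.coeff_mk, PowerSeries.coeff_C_mul]
  · have h2 : PowerSeries.coeff (R := ℝ) (n + 2) ((PowerSeries.X ^ 2) * PowerSeries.mk (fun n : ℕ => x (n : ℤ))) = x n := by
      rw [PowerSeries.coeff_X_pow_mul]
      simp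
    have h1 : PowerSeries.coeff (R := ℝ) (n + 2) (PowerSeries.C (R := ℝ) c * (PowerSeries.X * PowerSeries.mk (fun n : ℕ => x (n : ℤ)))) = c * x (n + 1) := by
      rw [PowerSeries.coeff_C_mul, PowerSeries.coeff_succ_X_mul, PowerSeries.coeff_mk]
      norm_cast
    rw [mul_assoc] at *
    simp only [PowerSeries.coeff_mk, h1, h2]
    have := hlin (n + 1)
    push_cast at this ⊢
    have e : (n : ℤ) + 1 - 1 = n := by ring
    rw [e] at this
    simp [PowerSeries.coeff_C, PowerSeries.coeff_X]
    linarith [this]
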